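/- Let λ be a real number with λ > 0 and λ ≠ 1, let d ≥ 1 and n ≥ 0 be integers, and let x ∈ ℂ. Then B_n(λ; x) = d^{n−1}·∑_{a=0}^{d−1} λ^a·B_n(λ^d; (x + a)/d) (the distribution/multiplication formula for λ-Bernoulli polynomials). -/

import Mathlib

/-- The λ-Bernoulli numbers `B_n(λ)`, defined by `B_0(λ) = Log λ / (λ - 1)` and, for `n ≥ 1`,
by the recurrence `λ·∑_{k=0}^{n} C(n,k)·B_k(λ) - B_n(λ) = (1 if n = 1, 0 if n ≥ 2)`,
encoding the generating function `(Log λ + t)/(λ e^t - 1) = ∑ B_n(λ) t^n/n!`. -/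
noncomputable def lambdaBernoulli (lam : ℂ) : ℕ → ℂ
  | 0 => Complex.log lam / (lam - 1)
  | n + 1 =>
      ((if n = 0 then (1 : ℂ) else 0) -
        lam * ∑ k : Fin (n + 1), ((n + 1).choose (k : ℕ) : ℂ) * lambdaBernoulli lam k) / (lam - 1)

/-- The λ-Bernoulli polynomials `B_n(λ; x) = ∑_{k=0}^{n} C(n,k)·B_k(λ)·x^{n-k}`. -/
noncomputable def lambdaBernoulliPoly (lam : ℂ) (n : ℕ) (x : ℂ) : ℂ :=
  ∑ k ∈ Finset.range (n + 1), (n.choose k : ℂ) * lambdaBernoulli lam k * x ^ (n - k)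

open Finset

lemma lb_rec (μ : ℂ) (hμ : μ ≠ 1) (n : ℕ) :
    μ * ∑ j ∈ range (n + 2), ((n+1).choose j : ℂ) * lambdaBernoulli μ j
      - lambdaBernoulli μ (n+1) = if n = 0 then 1 else 0 := by
  have hne : μ - 1 ≠ 0 := sub_ne_zero.mpr hμ
  have hdef : lambdaBernoulli μ (n+1) * (μ - 1)
      = (if n = 0 then (1:ℂ) else 0) -
        μ * ∑ k ∈ range (n + 1), ((n + 1).choose k : ℂ) * lambdaBernoulli μ k := by
    rw [lambdaBernoulli, div_mul_cancel₀ _ hne,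
      Fin.sum_univ_eq_sum_range (fun k => (((n+1).choose k : ℕ) : ℂ) * lambdaBernoulli μ k) (n+1)]
  rw [Finset.sum_range_succ]
  simp only [Nat.choose_self, Nat.cast_one, one_mul]
  linear_combination hdef

lemma appell (μ : ℂ) (n : ℕ) (x y : ℂ) :
    lambdaBernoulliPoly μ n (x + y) =
      ∑ k ∈ range (n+1), (n.choose k : ℂ) * lambdaBernoulliPoly μ k x * y ^ (n - k) := by
  unfold lambdaBernoulliPoly
  simp only [add_pow, Finset.mul_sum, Finset.sum_mul]
  rw [Finset.sum_sigma', Finset.sum_sigma']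
  refine Finset.sum_nbij' (fun p => ⟨p.1 + p.2, p.1⟩) (fun p => ⟨p.2, p.1 - p.2⟩) ?_ ?_ ?_ ?_ ?_
  · rintro ⟨k, j⟩ h
    simp only [Finset.mem_sigma, Finset.mem_range, Nat.lt_succ_iff] at h ⊢
    omega
  · rintro ⟨m, i⟩ h
    simp only [Finset.mem_sigma, Finset.mem_range, Nat.lt_succ_iff] at h ⊢
    omega
  · rintro ⟨k, j⟩ h; simp
  · rintro ⟨m, i⟩ h
    simp only [Finset.mem_sigma, Finset.mem_range, Nat.lt_succ_iff] at h
    simp only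
    rw [Nat.add_sub_cancel' h.2]
  · rintro ⟨k, j⟩ h
    simp only [Finset.mem_sigma, Finset.mem_range, Nat.lt_succ_iff] at h
    have hc : (n.choose (k+j)) * ((k+j).choose k) = n.choose k * (n-k).choose j := by
      rw [Nat.choose_mul (by omega), Nat.add_sub_cancel_left]
    have hcc : ((n.choose (k+j) : ℂ)) * (((k+j).choose k : ℂ)) = (n.choose k : ℂ) * ((n-k).choose j : ℂ) := by
      exact_mod_cast congrArg (Nat.cast : ℕ → ℂ) hc
    simp only [Nat.add_sub_cancel_left]
    have he : n - (k + j) = n - k - j := by omega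
    rw [he]
    linear_combination -(lambdaBernoulli μ k * x ^ j * y ^ (n - k - j)) * hcc

lemma diff_eq (μ : ℂ) (hμ : μ ≠ 1) (n : ℕ) (x : ℂ) :
    μ * lambdaBernoulliPoly μ n (x + 1) - lambdaBernoulliPoly μ n x
      = Complex.log μ * x ^ n + (n : ℂ) * x ^ (n - 1) := by
  have hne : μ - 1 ≠ 0 := sub_ne_zero.mpr hμ
  have key : ∀ k : ℕ, μ * lambdaBernoulliPoly μ k 1 - lambdaBernoulli μ k
      = if k = 0 then Complex.log μ else if k = 1 then 1 else 0 := by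
    intro k
    cases k with
    | zero =>
        simp only [lambdaBernoulliPoly, zero_add, Finset.range_one, Finset.sum_singleton,
          Nat.choose_self, Nat.cast_one, one_mul, pow_zero, mul_one, if_pos rfl]
        rw [lambdaBernoulli]
        field_simp
        simp only [↓reduceIte]
        ring
    | succ m =>
        have h := lb_rec μ hμ m
        have hP : lambdaBernoulliPoly μ (m+1) 1
            = ∑ j ∈ range (m + 2), ((m+1).choose j : ℂ) * lambdaBernoulli μ j := by
          unfold lambdaBernoulliPoly
          exact Finset.sum_congr rfl (fun j _ => by simp)
        rw [hP]
        simp only [Nat.succ_ne_zero, if_false, Nat.add_eq_right] at *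
        rw [mul_comm μ _] at h ⊢
        convert h using 2
  rw [add_comm x 1, appell]
  have expand : lambdaBernoulliPoly μ n x
      = ∑ k ∈ range (n+1), (n.choose k : ℂ) * lambdaBernoulli μ k * x ^ (n-k) := rfl
  rw [expand, Finset.mul_sum, ← Finset.sum_sub_distrib]
  have step : ∀ k ∈ range (n+1),
      μ * ((n.choose k : ℂ) * lambdaBernoulliPoly μ k 1 * x ^ (n - k)) -
        (n.choose k : ℂ) * lambdaBernoulli μ k * x ^ (n - k)
      = (n.choose k : ℂ) * (if k = 0 then Complex.log μ else if k = 1 then 1 else 0) * x ^ (n-k) := by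
    intro k _
    rw [← key k]
    ring
  rw [Finset.sum_congr rfl step]
  cases n with
  | zero => simp
  | succ m =>
    rw [Finset.sum_range_succ', Finset.sum_range_succ']
    have hz : ∀ i ∈ range m, ((m+1).choose (i+1+1) : ℂ) *
        (if i+1+1 = 0 then Complex.log μ else if i+1+1 = 1 then 1 else 0) * x ^ (m+1-(i+1+1)) = 0 := by
      intro i _
      simp
    rw [Finset.sum_congr rfl hz, Finset.sum_const_zero]
    simp
    ring

lemma R_appell (μ lamC : ℂ) (d : ℕ) (hd : 1 ≤ d) (n : ℕ) (x y : ℂ) :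
    (d:ℂ)^((n:ℤ)-1) * ∑ a ∈ range d, lamC^a * lambdaBernoulliPoly μ n ((x+y+a)/d)
    = ∑ k ∈ range (n+1), (n.choose k : ℂ) *
        ((d:ℂ)^((k:ℤ)-1) * ∑ a ∈ range d, lamC^a * lambdaBernoulliPoly μ k ((x+a)/d)) * y^(n-k) := by
  have hd0 : (d:ℂ) ≠ 0 := Nat.cast_ne_zero.mpr (by omega)
  have h1 : ∀ a : ℕ, (x+y+(a:ℂ))/d = ((x+a)/d) + y/d := by intro a; ring
  have hzp : ∀ k, k ≤ n → (d:ℂ)^((n:ℤ)-1) * (y/d)^(n-k) = (d:ℂ)^((k:ℤ)-1) * y^(n-k) := by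
    intro k hk
    have he : ((n:ℤ)-1) - ((n-k : ℕ) : ℤ) = (k:ℤ)-1 := by
      rw [Nat.cast_sub hk]; ring
    calc (d:ℂ)^((n:ℤ)-1) * (y/d)^(n-k)
        = ((d:ℂ)^((n:ℤ)-1) / (d:ℂ)^(((n-k:ℕ)):ℤ)) * y^(n-k) := by
          rw [div_pow, zpow_natCast]; ring
      _ = (d:ℂ)^((k:ℤ)-1) * y^(n-k) := by rw [← zpow_sub₀ hd0, he]
  calc (d:ℂ)^((n:ℤ)-1) * ∑ a ∈ range d, lamC^a * lambdaBernoulliPoly μ n ((x+y+a)/d)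
      = ∑ a ∈ range d, ∑ k ∈ range (n+1), (d:ℂ)^((n:ℤ)-1) * (lamC^a *
          ((n.choose k : ℂ) * lambdaBernoulliPoly μ k ((x+a)/d) * (y/d)^(n-k))) := by
        rw [Finset.mul_sum]
        refine Finset.sum_congr rfl (fun a _ => ?_)
        rw [h1 a, appell, Finset.mul_sum, Finset.mul_sum]
    _ = ∑ k ∈ range (n+1), ∑ a ∈ range d, (d:ℂ)^((n:ℤ)-1) * (lamC^a *
          ((n.choose k : ℂ) * lambdaBernoulliPoly μ k ((x+a)/d) * (y/d)^(n-k))) :=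
        Finset.sum_comm
    _ = _ := by
        refine Finset.sum_congr rfl (fun k hk => ?_)
        rw [Finset.mem_range, Nat.lt_succ_iff] at hk
        simp only [Finset.mul_sum, Finset.sum_mul]
        refine Finset.sum_congr rfl (fun a _ => ?_)
        have := hzp k hk
        linear_combination (lamC^a * (n.choose k : ℂ) * lambdaBernoulliPoly μ k ((x+a)/d)) * this

lemma pow_ne_one (lam : ℝ) (hpos : 0 < lam) (h1 : lam ≠ 1) (d : ℕ) (hd : 1 ≤ d) :
    ((lam : ℂ))^d ≠ 1 := by
  have : lam ^ d ≠ 1 := by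
    rcases lt_or_gt_of_ne h1 with h | h
    · exact ne_of_lt (pow_lt_one₀ hpos.le h (by omega))
    · exact ne_of_gt (one_lt_pow₀ h (by omega))
  intro hc
  apply this
  have : ((lam ^ d : ℝ) : ℂ) = ((1:ℝ):ℂ) := by push_cast; simpa using hc
  exact_mod_cast this

lemma log_pow_eq (lam : ℝ) (hpos : 0 < lam) (d : ℕ) :
    Complex.log ((lam : ℂ)^d) = (d : ℂ) * Complex.log (lam : ℂ) := by
  have h1 : ((lam : ℂ))^d = (((lam ^ d : ℝ)) : ℂ) := by push_cast; ring
  rw [h1, ← Complex.ofReal_log (le_of_lt (pow_pos hpos d)),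
    ← Complex.ofReal_log hpos.le, Real.log_pow]
  push_cast; ring

lemma R_diff (lam : ℝ) (hpos : 0 < lam) (h1 : lam ≠ 1) (d : ℕ) (hd : 1 ≤ d) (n : ℕ) (x : ℂ) :
    (lam:ℂ) * ((d:ℂ)^((n:ℤ)-1) * ∑ a ∈ range d,
        (lam:ℂ)^a * lambdaBernoulliPoly ((lam:ℂ)^d) n ((x+1+a)/d))
    - (d:ℂ)^((n:ℤ)-1) * ∑ a ∈ range d,
        (lam:ℂ)^a * lambdaBernoulliPoly ((lam:ℂ)^d) n ((x+a)/d)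
    = Complex.log (lam:ℂ) * x^n + (n:ℂ) * x^(n-1) := by
  have hd0 : (d:ℂ) ≠ 0 := Nat.cast_ne_zero.mpr (by omega)
  have hμ : ((lam:ℂ))^d ≠ 1 := pow_ne_one lam hpos h1 d hd
  set μ := ((lam:ℂ))^d with hμdef
  set g : ℕ → ℂ := fun a => (lam:ℂ)^a * lambdaBernoulliPoly μ n ((x+a)/d) with hg
  have hshift : ∀ a : ℕ, (lam:ℂ) * ((lam:ℂ)^a * lambdaBernoulliPoly μ n ((x+1+a)/d)) = g (a+1) := by
    intro a
    have harg : x+1+(a:ℂ) = x + ((a+1 : ℕ) : ℂ) := by push_cast; ring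
    simp only [hg, harg, pow_succ]
    ring
  have step1 : (lam:ℂ) * ((d:ℂ)^((n:ℤ)-1) * ∑ a ∈ range d, (lam:ℂ)^a *
        lambdaBernoulliPoly μ n ((x+1+a)/d))
      - (d:ℂ)^((n:ℤ)-1) * ∑ a ∈ range d, g a
      = (d:ℂ)^((n:ℤ)-1) * (g d - g 0) := by
    have : (lam:ℂ) * ∑ a ∈ range d, (lam:ℂ)^a * lambdaBernoulliPoly μ n ((x+1+a)/d)
        = ∑ a ∈ range d, g (a+1) := by
      rw [Finset.mul_sum]; exact Finset.sum_congr rfl (fun a _ => hshift a)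
    have tele : (∑ a ∈ range d, g (a+1)) - ∑ a ∈ range d, g a = g d - g 0 := by
      rw [← Finset.sum_sub_distrib, Finset.sum_range_sub g d]
    linear_combination ((d:ℂ)^((n:ℤ)-1)) * this + ((d:ℂ)^((n:ℤ)-1)) * tele
  rw [step1]
  have hgd : g d - g 0 = μ * lambdaBernoulliPoly μ n (x/d + 1) - lambdaBernoulliPoly μ n (x/d) := by
    simp only [hg]
    have harg : (x + (d:ℂ))/d = x/d + 1 := by field_simp
    have harg0 : (x + ((0:ℕ):ℂ))/d = x/d := by push_cast; ring_nf
    rw [harg, harg0]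
    ring
  rw [hgd, diff_eq μ hμ n (x/d), hμdef, log_pow_eq lam hpos d]
  cases n with
  | zero => simp; field_simp
  | succ m =>
    have he1 : ((m+1 : ℕ) : ℤ) - 1 = ((m : ℕ) : ℤ) := by push_cast; ring
    rw [he1, zpow_natCast]
    simp only [Nat.add_sub_cancel]
    field_simp
    have hdm : (d:ℂ)^m * (d:ℂ)⁻¹^m = 1 := by rw [← mul_pow, mul_inv_cancel₀ hd0, one_pow]
    have hdd : (d:ℂ) * (d:ℂ)⁻¹ = 1 := mul_inv_cancel₀ hd0
    linear_combination (Complex.log (lam:ℂ) * x * x^m * ((d:ℂ)^m * (d:ℂ)⁻¹^m)) * hdd +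
      (Complex.log (lam:ℂ) * x * x^m + x^m * ((m+1 : ℕ) : ℂ)) * hdm

/-- distribution (multiplication) formula for the λ-Bernoulli polynomials:
for real `λ > 0`, `λ ≠ 1`, integers `d ≥ 1`, `n ≥ 0` and `x ∈ ℂ`,
`B_n(λ; x) = d^{n-1}·∑_{a=0}^{d-1} λ^a·B_n(λ^d; (x + a)/d)`. -/
theorem lambdaBernoulliPoly_multiplication (lam : ℝ) (hpos : 0 < lam) (h1 : lam ≠ 1)
    (d : ℕ) (hd : 1 ≤ d) (n : ℕ) (x : ℂ) :
    lambdaBernoulliPoly (lam : ℂ) n x =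
      (d : ℂ) ^ ((n : ℤ) - 1) *
        ∑ a ∈ Finset.range d,
          (lam : ℂ) ^ a * lambdaBernoulliPoly ((lam : ℂ) ^ d) n ((x + (a : ℂ)) / (d : ℂ)) := by
  have hd0 : (d:ℂ) ≠ 0 := Nat.cast_ne_zero.mpr (by omega)
  have hlam1 : (lam:ℂ) ≠ 1 := by
    intro hc; apply h1
    have : ((lam:ℝ):ℂ) = ((1:ℝ):ℂ) := by simpa using hc
    exact_mod_cast this
  induction n using Nat.strong_induction_on generalizing x with
  | _ n IH =>
    set E : ℂ → ℂ := fun z => lambdaBernoulliPoly (lam:ℂ) n z -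
      (d:ℂ)^((n:ℤ)-1) * ∑ a ∈ range d,
        (lam:ℂ)^a * lambdaBernoulliPoly ((lam:ℂ)^d) n ((z+a)/d) with hE
    suffices hs : E x = 0 by
      have := sub_eq_zero.mp hs
      simpa [hE] using this
    have hconst : ∀ y : ℂ, E (0 + y) = E 0 := by
      intro y
      have hl := appell (lam:ℂ) n 0 y
      have hr := R_appell ((lam:ℂ)^d) (lam:ℂ) d hd n 0 y
      simp only [hE]
      rw [hl, hr, ← Finset.sum_sub_distrib, Finset.sum_range_succ]
      have hz : ∀ k ∈ range n,
          (n.choose k:ℂ) * lambdaBernoulliPoly (lam:ℂ) k 0 * y^(n-k) -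
            (n.choose k:ℂ) * ((d:ℂ)^((k:ℤ)-1) * ∑ a ∈ range d,
              (lam:ℂ)^a * lambdaBernoulliPoly ((lam:ℂ)^d) k ((0+a)/d)) * y^(n-k) = 0 := by
        intro k hk
        rw [Finset.mem_range] at hk
        rw [IH k hk 0]
        ring
      rw [Finset.sum_congr rfl hz, Finset.sum_const_zero, zero_add]
      simp
    have hzero : E 0 = 0 := by
      have hdl := diff_eq (lam:ℂ) hlam1 n 0
      have hdr := R_diff lam hpos h1 d hd n 0
      have h01 : E (0+1) = E 0 := hconst 1
      have hkey : (lam:ℂ) * E (0+1) - E 0 = 0 := by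
        simp only [hE]
        linear_combination hdl - hdr
      rw [h01] at hkey
      have hne : (lam:ℂ) - 1 ≠ 0 := sub_ne_zero.mpr hlam1
      have : ((lam:ℂ) - 1) * E 0 = 0 := by linear_combination hkey
      rcases mul_eq_zero.mp this with h | h
      · exact absurd h hne
      · exact h
    have := hconst x
    rw [zero_add] at this
    rw [this, hzero]
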